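/- Let τ ≥ 0 and let {x^k}_{k≥0} be a sequence in ℝ^N such that for every k ≥ 0 and every i ∈ J \ T(x^k), G_iᵀ x^{k+1} = 0 (the thresholding support-shrinking property). Then for every k ≥ 0, T(x^{k+1}) ⊆ S(x^{k+1}) ⊆ T(x^k) ⊆ S(x^k), and both the support and the τ-support sequences converge in finitely many iterations: there exists an integer K ≥ 0 such that S(x^k) = T(x^k) = S(x^K) for every k ≥ K. -/

import Mathlib

/-- The dot product `gᵀ x` of two vectors in `ℝ^N`. -/
noncomputable def dotp {N : ℕ} (g x : Fin N → ℝ) : ℝ := ∑ l, g l * x l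

/-- The support `S(x) = {i ∈ J : G_iᵀ x ≠ 0}`. -/
def supp {N : ℕ} {ι : Type} (G : ι → Fin N → ℝ) (x : Fin N → ℝ) : Set ι :=
  {i : ι | dotp (G i) x ≠ 0}

/-- The `τ`-support `T(x) = {i ∈ J : |G_iᵀ x| > τ}`. -/
def tsupp {N : ℕ} {ι : Type} (G : ι → Fin N → ℝ) (τ : ℝ) (x : Fin N → ℝ) : Set ι :=
  {i : ι | τ < |dotp (G i) x|}

/-- finite convergence of the support and `τ`-support. If the
sequence `{x^k}` satisfies the thresholding support-shrinking property
(`G_iᵀ x^{k+1} = 0` whenever `i ∉ T(x^k)`), then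
`T(x^{k+1}) ⊆ S(x^{k+1}) ⊆ T(x^k) ⊆ S(x^k)` for every `k`, and there is
`K` such that `S(x^k) = T(x^k) = S(x^K)` for every `k ≥ K`. -/
theorem finite_convergence_of_support {N : ℕ} {ι : Type} [Fintype ι]
    (G : ι → Fin N → ℝ) (τ : ℝ) (hτ : 0 ≤ τ) (x : ℕ → Fin N → ℝ)
    (hshrink : ∀ k : ℕ, ∀ i : ι, i ∉ tsupp G τ (x k) → dotp (G i) (x (k + 1)) = 0) :
    (∀ k : ℕ,
      tsupp G τ (x (k + 1)) ⊆ supp G (x (k + 1)) ∧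
      supp G (x (k + 1)) ⊆ tsupp G τ (x k) ∧
      tsupp G τ (x k) ⊆ supp G (x k)) ∧
    (∃ K : ℕ, ∀ k : ℕ, K ≤ k →
      supp G (x k) = supp G (x K) ∧ tsupp G τ (x k) = supp G (x K)) := by
  have t_sub_s : ∀ k : ℕ, tsupp G τ (x k) ⊆ supp G (x k) := by
    intro k i hi
    have : τ < |dotp (G i) (x k)| := hi
    intro h0
    rw [h0] at this
    simp at this
    linarith
  have chain : ∀ k : ℕ, supp G (x (k + 1)) ⊆ tsupp G τ (x k) := by
    intro k i hi
    by_contra hmem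
    exact hi (hshrink k i hmem)
  have dec : ∀ k : ℕ, supp G (x (k + 1)) ⊆ supp G (x k) := fun k =>
    (chain k).trans (t_sub_s k)
  have mono : ∀ k m : ℕ, k ≤ m → supp G (x m) ⊆ supp G (x k) := by
    intro k m hkm
    induction m with
    | zero => simp_all
    | succ n ih =>
      rcases Nat.lt_or_ge k (n + 1) with h | h
      · exact (dec n).trans (ih (Nat.lt_succ_iff.mp h))
      · have : k = n + 1 := le_antisymm hkm h
        subst this; exact subset_rfl
  refine ⟨fun k => ⟨t_sub_s (k + 1), chain k, t_sub_s k⟩, ?_⟩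
  set f : ℕ → ℕ := fun n => (supp G (x n)).ncard with hf
  obtain ⟨m, ⟨K, hK⟩, hmin⟩ := Nat.lt_wfRel.wf.has_min (Set.range f) ⟨f 0, 0, rfl⟩
  refine ⟨K, fun k hk => ?_⟩
  have hsub : supp G (x k) ⊆ supp G (x K) := mono K k hk
  have hle : f K ≤ f k := by
    have := hmin (f k) ⟨k, rfl⟩
    rw [hK]; exact Nat.not_lt.mp this
  have heq : supp G (x k) = supp G (x K) := by
    apply Set.eq_of_subset_of_ncard_le hsub hle (Set.toFinite _)
  refine ⟨heq, ?_⟩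
  apply subset_antisymm ((t_sub_s k).trans heq.subset)
  have : supp G (x (k+1)) ⊆ tsupp G τ (x k) := chain k
  have h2 : supp G (x K) ⊆ supp G (x (k+1)) := by
    have hsub2 : supp G (x (k+1)) ⊆ supp G (x K) := mono K (k+1) (hk.trans (Nat.le_succ k))
    have hle2 : f K ≤ f (k+1) := by
      have := hmin (f (k+1)) ⟨k+1, rfl⟩
      rw [hK]; exact Nat.not_lt.mp this
    exact (Set.eq_of_subset_of_ncard_le hsub2 hle2 (Set.toFinite _)).symm.subset
  exact h2.trans this
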